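/- Let n ≥ 3 and λ ≥ 0. For every x ∈ ℝⁿ, the bHP cyclical component converges to zero under unlimited boosting: (I_n − S(λ))ᵐ x → 0 as m → ∞; equivalently, the bHP trend B_m x = (I_n − (I_n − S(λ))ᵐ)x converges to the data x itself as m → ∞ (boosting saturation in finite samples). -/

import Mathlib

open Matrix Filter

noncomputable section

/-- The second-differencing matrix `Dᵀ` of the HP filter: the `(n−2) × n` real matrix with
`(Dᵀ f)_j = f_j − 2 f_{j+1} + f_{j+2}` (here written with 0-based indices). -/
def secondDiff (n : ℕ) : Matrix (Fin (n - 2)) (Fin n) ℝ := fun j t =>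
  if t.1 = j.1 then 1 else if t.1 = j.1 + 1 then -2 else if t.1 = j.1 + 2 then 1 else 0

/-- The HP smoothing matrix `S(λ) = (I_n + λ D Dᵀ)⁻¹`, where `Dᵀ = secondDiff n`. -/
def hpS (n : ℕ) (lam : ℝ) : Matrix (Fin n) (Fin n) ℝ :=
  (1 + lam • ((secondDiff n)ᵀ * secondDiff n))⁻¹

lemma psd_smul_aux {n : ℕ} {M : Matrix (Fin n) (Fin n) ℝ} (hM : M.PosSemidef) {c : ℝ}
    (hc : 0 ≤ c) : (c • M).PosSemidef := by
  refine .of_dotProduct_mulVec_nonneg (by rw [Matrix.IsHermitian, conjTranspose_smul, star_trivial, hM.1.eq]) fun x => ?_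
  rw [smul_mulVec, dotProduct_smul, smul_eq_mul]
  exact mul_nonneg hc (hM.dotProduct_mulVec_nonneg x)

theorem stmt5 (n : ℕ) (hn : 3 ≤ n) (lam : ℝ) (hlam : 0 ≤ lam) (x : Fin n → ℝ) :
    Tendsto (fun m : ℕ => ((1 - hpS n lam) ^ m) *ᵥ x) atTop (nhds 0) ∧
      Tendsto (fun m : ℕ => (1 - (1 - hpS n lam) ^ m) *ᵥ x) atTop (nhds x) := by
  set B := secondDiff n with hBdef
  set M := Bᵀ * B with hMdef
  set A := (1 : Matrix (Fin n) (Fin n) ℝ) + lam • M with hAdef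
  have hM : M.PosSemidef := by
    have := posSemidef_conjTranspose_mul_self B
    rwa [show Bᴴ = Bᵀ from rfl] at this
  have hlamM : (lam • M).PosSemidef := psd_smul_aux hM hlam
  have hA : A.PosDef := Matrix.PosDef.add_posSemidef Matrix.PosDef.one hlamM
  have hdet : IsUnit A.det := hA.det_pos.ne'.isUnit
  have hSeq : hpS n lam = A⁻¹ := rfl
  set S := hpS n lam with hSdef
  have hS : S.PosDef := by rw [hSeq]; exact hA.inv
  set C := (1 : Matrix (Fin n) (Fin n) ℝ) - S with hCdef
  have hAsymm : Aᵀ = A := hA.isHermitian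
  -- C is PSD
  have hCpsd : C.PosSemidef := by
    refine .of_dotProduct_mulVec_nonneg (isHermitian_one.sub hS.isHermitian) fun z => ?_
    have hz : A *ᵥ (S *ᵥ z) = z := by
      rw [mulVec_mulVec, hSeq, mul_nonsing_inv _ hdet, one_mulVec]
    set y := S *ᵥ z with hydef
    have h1 : C *ᵥ z = (A - 1) *ᵥ y := by
      rw [hCdef, sub_mulVec, sub_mulVec, one_mulVec, one_mulVec, hz]
    have h2 : star z ⬝ᵥ (C *ᵥ z) = y ⬝ᵥ ((A * (A - 1)) *ᵥ y) := by
      rw [show star z = z from funext fun i => star_trivial _, h1, ← hz,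
        ← mulVec_mulVec, dotProduct_mulVec y, ← mulVec_transpose, hAsymm]
    have hAA : A * (A - 1) = lam • M + (lam * lam) • (M * M) := by
      rw [hAdef, add_sub_cancel_left, add_mul, one_mul, Matrix.smul_mul,
        Matrix.mul_smul, smul_smul]
    have hRHS : (lam • M + (lam * lam) • (M * M)).PosSemidef := by
      refine hlamM.add (psd_smul_aux ?_ (mul_self_nonneg lam))
      have := hM.pow 2
      rwa [pow_two] at this
    rw [h2, hAA]
    exact hRHS.dotProduct_mulVec_nonneg y
  set hC := hCpsd.1 with hhC
  set μ := hC.eigenvalues with hμdef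
  have hμ0 : ∀ i, 0 ≤ μ i := fun i => hCpsd.eigenvalues_nonneg i
  have hμ1 : ∀ i, μ i < 1 := by
    intro i
    set v : Fin n → ℝ := ⇑(hC.eigenvectorBasis i) with hvdef
    have hv : C *ᵥ v = μ i • v := hC.mulVec_eigenvectorBasis i
    have hvne : v ≠ 0 := by
      intro h
      exact hC.eigenvectorBasis.orthonormal.ne_zero i (by ext j; exact congrFun h j)
    have hpos := hS.dotProduct_mulVec_pos hvne
    have hSv : S *ᵥ v = (1 - μ i) • v := by
      have hSC : S = 1 - C := by rw [hCdef, sub_sub_cancel]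
      rw [hSC, sub_mulVec, one_mulVec, hv, sub_smul, one_smul]
    rw [hSv, dotProduct_smul, smul_eq_mul, show star v = v from funext fun j => star_trivial _]
      at hpos
    have hvv : 0 ≤ v ⬝ᵥ v := Finset.sum_nonneg fun j _ => mul_self_nonneg _
    nlinarith
  -- spectral decomposition
  set U : Matrix (Fin n) (Fin n) ℝ := (hC.eigenvectorUnitary : Matrix (Fin n) (Fin n) ℝ)
    with hUdef
  have hUU : star U * U = 1 := mem_unitaryGroup_iff'.mp hC.eigenvectorUnitary.2
  have hUU' : U * star U = 1 := mem_unitaryGroup_iff.mp hC.eigenvectorUnitary.2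
  have hspec : C = U * diagonal μ * star U := by
    have := hC.spectral_theorem
    rwa [show (RCLike.ofReal ∘ hC.eigenvalues : Fin n → ℝ) = μ from rfl] at this
  have key : ∀ m : ℕ, C ^ m = U * diagonal (fun i => μ i ^ m) * star U := by
    intro m
    induction m with
    | zero => simp [pow_zero, diagonal_one, hUU']
    | succ m ih =>
      rw [pow_succ, ih, hspec]
      rw [show ∀ (P Q : Matrix (Fin n) (Fin n) ℝ),
        (U * P * star U) * (U * Q * star U) = U * (P * (star U * U) * Q) * star U from
        fun P Q => by noncomm_ring, hUU, Matrix.mul_one, diagonal_mul_diagonal]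
      simp [pow_succ]
  have hdiag : Tendsto (fun m : ℕ => diagonal (fun i => μ i ^ m)) atTop
      (nhds (0 : Matrix (Fin n) (Fin n) ℝ)) := by
    refine tendsto_pi_nhds.mpr ?_
    intro i
    rw [tendsto_pi_nhds]
    intro j
    by_cases h : i = j
    · subst h
      simpa [diagonal_apply_eq] using
        tendsto_pow_atTop_nhds_zero_of_lt_one (hμ0 i) (hμ1 i)
    · simpa [diagonal_apply_ne _ h] using tendsto_const_nhds
  have hCm : Tendsto (fun m : ℕ => C ^ m) atTop (nhds 0) := by
    have hcont : Continuous fun N : Matrix (Fin n) (Fin n) ℝ => U * N * star U :=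
      (continuous_const.matrix_mul continuous_id).matrix_mul continuous_const
    have := (hcont.tendsto 0).comp hdiag
    simp only [Function.comp_def, Matrix.mul_zero, Matrix.zero_mul] at this
    convert this using 2 with m
    exact key m
  have hmain : Tendsto (fun m : ℕ => (C ^ m) *ᵥ x) atTop (nhds 0) := by
    have hcont : Continuous fun N : Matrix (Fin n) (Fin n) ℝ => N *ᵥ x :=
      continuous_id.matrix_mulVec continuous_const
    have := (hcont.tendsto 0).comp hCm
    simpa [Function.comp_def, zero_mulVec] using this
  refine ⟨hmain, ?_⟩
  have h2 : Tendsto (fun m : ℕ => x - (C ^ m) *ᵥ x) atTop (nhds x) := by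
    simpa using (tendsto_const_nhds (α := ℕ) (x := x)).sub hmain
  convert h2 using 2 with m
  rw [sub_mulVec, one_mulVec]

end
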